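/- Suppose P(τ), φ(τ) are families of substochastic kernels on ℤ^N, (q+1)-times continuously differentiable in τ on [0, δ_r), agreeing with all derivatives up to order q at τ = 0, and satisfying the derivative bound Σ_{x'} (1+|x'|^r)|φ^{(q+1)}(τ,x,x')| ≤ H_r(|x|^{s_r}+1) e^{γ_r τ} and the same bound for P^{(q+1)}. Then there exists C_r > 0 such that for all τ ∈ [0, δ_r) and all g ∈ M, |(φ(τ) − P(τ)) g|_r ≤ C_r |g|_{s_r + r} τ^{q+1} e^{γ_r τ}. -/
import Mathlib

/-- `nrm` is a norm on `ℝ^N`. -/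
def IsNormOn (N : ℕ) (nrm : (Fin N → ℝ) → ℝ) : Prop :=
  (∀ v, 0 ≤ nrm v) ∧ (∀ v, nrm v = 0 ↔ v = 0) ∧
  (∀ (c : ℝ) (v), nrm (c • v) = |c| * nrm v) ∧
  (∀ v w, nrm (v + w) ≤ nrm v + nrm w)

/-- The norm restricted to lattice points `ℤ^N`. -/
noncomputable def latNorm {N : ℕ} (nrm : (Fin N → ℝ) → ℝ) (x : Fin N → ℤ) : ℝ :=
  nrm (fun i => (x i : ℝ))

/-- A family `ψ 0` together with its derivative families `ψ i` (`i`-th τ-derivative of the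
kernel), is a substochastic kernel family that is `q+1` times continuously differentiable
on `[0, δ)`. -/
def DerivFamily {N : ℕ} (q : ℕ) (δ : ℝ)
    (ψ : ℕ → ℝ → (Fin N → ℤ) → (Fin N → ℤ) → ℝ) : Prop :=
  -- substochastic kernel
  (∀ τ ∈ Set.Ico (0:ℝ) δ, ∀ x x', 0 ≤ ψ 0 τ x x') ∧
  (∀ τ ∈ Set.Ico (0:ℝ) δ, ∀ x,
      (∑' x' : Fin N → ℤ, ENNReal.ofReal (ψ 0 τ x x')) ≤ 1) ∧
  -- ψ (i+1) is the derivative of ψ i on [0, δ), for i = 0, …, q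
  (∀ i ≤ q, ∀ (x x' : Fin N → ℤ), ∀ τ ∈ Set.Ico (0:ℝ) δ,
      HasDerivAt (fun t => ψ i t x x') (ψ (i+1) τ x x') τ) ∧
  -- the (q+1)-st derivative is continuous on [0, δ)
  (∀ (x x' : Fin N → ℤ), ContinuousOn (fun t => ψ (q+1) t x x') (Set.Ico (0:ℝ) δ))

lemma taylor_bound (q : ℕ) (δ : ℝ) (f : ℕ → ℝ → ℝ)
    (hderiv : ∀ i ≤ q, ∀ t ∈ Set.Ico (0:ℝ) δ, HasDerivAt (f i) (f (i+1) t) t)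
    (hcont : ContinuousOn (f (q+1)) (Set.Ico (0:ℝ) δ))
    (h0 : ∀ i ≤ q, f i 0 = 0)
    {τ : ℝ} (hτ : τ ∈ Set.Ico (0:ℝ) δ) :
    |f 0 τ| ≤ τ ^ q * ∫ t in (0:ℝ)..τ, |f (q+1) t| := by
  obtain ⟨hτ0, hτδ⟩ := hτ
  have hcont' : ∀ i ≤ q + 1, ContinuousOn (f i) (Set.Ico (0:ℝ) δ) := by
    intro i hi
    rcases Nat.lt_or_ge i (q+1) with h | h
    · exact fun t ht => ((hderiv i (Nat.lt_succ_iff.mp h) t ht).continuousAt).continuousWithinAt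
    · have : i = q + 1 := le_antisymm hi h
      exact this ▸ hcont
  have hint : ∀ i ≤ q + 1, ∀ u : ℝ, 0 ≤ u → u < δ →
      IntervalIntegrable (f i) MeasureTheory.volume 0 u := by
    intro i hi u hu0 huδ
    apply ContinuousOn.intervalIntegrable
    rw [Set.uIcc_of_le hu0]
    exact (hcont' i hi).mono (fun t ht => ⟨ht.1, lt_of_le_of_lt ht.2 huδ⟩)
  have hftc : ∀ i ≤ q, ∀ u : ℝ, 0 ≤ u → u < δ →
      f i u = ∫ t in (0:ℝ)..u, f (i+1) t := by
    intro i hi u hu0 huδ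
    have h1 : ∫ t in (0:ℝ)..u, f (i+1) t = f i u - f i 0 := by
      apply intervalIntegral.integral_eq_sub_of_hasDerivAt
      · intro t ht
        rw [Set.uIcc_of_le hu0] at ht
        exact hderiv i hi t ⟨ht.1, lt_of_le_of_lt ht.2 huδ⟩
      · exact hint (i+1) (by omega) u hu0 huδ
    rw [h1, h0 i hi, sub_zero]
  set G : ℝ → ℝ := fun u => ∫ t in (0:ℝ)..u, |f (q+1) t| with hG
  have hintabs : ∀ a b : ℝ, 0 ≤ a → a ≤ b → b < δ →
      IntervalIntegrable (fun t => |f (q+1) t|) MeasureTheory.volume a b := by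
    intro a b ha hab hbδ
    apply ContinuousOn.intervalIntegrable
    rw [Set.uIcc_of_le hab]
    exact ((hcont' (q+1) le_rfl).mono
      (fun t ht => ⟨le_trans ha ht.1, lt_of_le_of_lt ht.2 hbδ⟩)).abs
  have hGnonneg : ∀ u : ℝ, 0 ≤ u → 0 ≤ G u := by
    intro u hu
    exact intervalIntegral.integral_nonneg hu (fun t _ => abs_nonneg _)
  have hGmono : ∀ t u : ℝ, 0 ≤ t → t ≤ u → u < δ → G t ≤ G u := by
    intro t u ht htu huδ
    have hsplit : G t + ∫ v in t..u, |f (q+1) v| = G u :=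
      intervalIntegral.integral_add_adjacent_intervals
        (hintabs 0 t le_rfl ht (lt_of_le_of_lt htu huδ)) (hintabs t u ht htu huδ)
    have : 0 ≤ ∫ v in t..u, |f (q+1) v| :=
      intervalIntegral.integral_nonneg htu (fun v _ => abs_nonneg _)
    linarith
  have key : ∀ k ≤ q, ∀ u : ℝ, 0 ≤ u → u < δ → |f (q - k) u| ≤ u ^ k * G u := by
    intro k
    induction k with
    | zero =>
      intro _ u hu0 huδ
      rw [Nat.sub_zero, pow_zero, one_mul, hftc q le_rfl u hu0 huδ]
      calc |∫ t in (0:ℝ)..u, f (q+1) t| ≤ ∫ t in (0:ℝ)..u, |f (q+1) t| := by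
            simpa [Real.norm_eq_abs] using
              intervalIntegral.norm_integral_le_integral_norm (f := f (q+1)) hu0
        _ = G u := rfl
    | succ k ih =>
      intro hk1 u hu0 huδ
      have hk : k ≤ q := by omega
      have heq : q - (k+1) + 1 = q - k := by omega
      have h1 : f (q - (k+1)) u = ∫ t in (0:ℝ)..u, f (q - k) t := by
        rw [hftc (q - (k+1)) (by omega) u hu0 huδ, heq]
      rw [h1]
      calc |∫ t in (0:ℝ)..u, f (q - k) t|
          ≤ ∫ t in (0:ℝ)..u, |f (q - k) t| := by
            simpa [Real.norm_eq_abs] using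
              intervalIntegral.norm_integral_le_integral_norm (f := f (q - k)) hu0
        _ ≤ ∫ _t in (0:ℝ)..u, u ^ k * G u := by
            apply intervalIntegral.integral_mono_on hu0
            · apply ContinuousOn.intervalIntegrable
              rw [Set.uIcc_of_le hu0]
              exact ((hcont' (q-k) (by omega)).mono
                (fun t ht => ⟨ht.1, lt_of_le_of_lt ht.2 huδ⟩)).abs
            · exact intervalIntegrable_const
            · intro t ht
              calc |f (q - k) t| ≤ t ^ k * G t := ih hk t ht.1 (lt_of_le_of_lt ht.2 huδ)
                _ ≤ u ^ k * G u := by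
                    apply mul_le_mul (pow_le_pow_left₀ ht.1 ht.2 k)
                      (hGmono t u ht.1 ht.2 huδ) (hGnonneg t ht.1)
                      (pow_nonneg hu0 k)
        _ = u ^ (k+1) * G u := by
            rw [intervalIntegral.integral_const, smul_eq_mul]
            ring
  have := key q le_rfl τ hτ0 hτδ
  simpa using this

lemma sumBound {N : ℕ} (nrm : (Fin N → ℝ) → ℝ) (hnn : ∀ v, 0 ≤ nrm v)
    (q r s : ℕ) (δ γ H : ℝ) (hH : 0 < H)
    (D : ℕ → ℝ → (Fin N → ℤ) → (Fin N → ℤ) → ℝ)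
    (hDcont : ∀ x y, ContinuousOn (fun t => D (q+1) t x y) (Set.Ico (0:ℝ) δ))
    (hDbd : ∀ t ∈ Set.Ico (0:ℝ) δ, ∀ x,
        (∑' y : Fin N → ℤ, ENNReal.ofReal ((1 + latNorm nrm y ^ r) * |D (q+1) t x y|))
          ≤ ENNReal.ofReal (2 * H * (latNorm nrm x ^ s + 1) * Real.exp (γ * t)))
    (htay : ∀ x y, ∀ τ ∈ Set.Ico (0:ℝ) δ,
        |D 0 τ x y| ≤ τ ^ q * ∫ t in (0:ℝ)..τ, |D (q+1) t x y|)
    {τ : ℝ} (hτ : τ ∈ Set.Ico (0:ℝ) δ) (x : Fin N → ℤ) :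
    (∑' y : Fin N → ℤ, ENNReal.ofReal ((1 + latNorm nrm y ^ r) * |D 0 τ x y|))
      ≤ ENNReal.ofReal (2 * H * Real.exp (|γ| * δ) * (latNorm nrm x ^ s + 1)
          * τ ^ (q+1) * Real.exp (γ * τ)) := by
  obtain ⟨hτ0, hτδ⟩ := hτ
  set K : ℝ := latNorm nrm x ^ s + 1 with hK
  have hxnn : 0 ≤ latNorm nrm x := hnn _
  have hK0 : 0 < K := by have := pow_nonneg hxnn s; simp only [hK]; linarith
  have hw : ∀ y : Fin N → ℤ, (0:ℝ) ≤ 1 + latNorm nrm y ^ r := by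
    intro y
    have := hnn (fun i => ((y i : ℝ)))
    have : 0 ≤ latNorm nrm y := this
    positivity
  set G : (Fin N → ℤ) → ℝ := fun y => ∫ t in (0:ℝ)..τ, |D (q+1) t x y| with hGdef
  set F : (Fin N → ℤ) → ℝ → ENNReal :=
    fun y t => ENNReal.ofReal ((1 + latNorm nrm y ^ r) * |D (q+1) t x y|) with hF
  have hIccsub : Set.Icc (0:ℝ) τ ⊆ Set.Ico (0:ℝ) δ :=
    fun t ht => ⟨ht.1, lt_of_le_of_lt ht.2 hτδ⟩
  have hIocsub : Set.Ioc (0:ℝ) τ ⊆ Set.Ico (0:ℝ) δ :=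
    fun t ht => ⟨le_of_lt ht.1, lt_of_le_of_lt ht.2 hτδ⟩
  -- Step 1: pointwise Taylor bound inside the sum
  have step1 : (∑' y : Fin N → ℤ, ENNReal.ofReal ((1 + latNorm nrm y ^ r) * |D 0 τ x y|))
      ≤ ENNReal.ofReal (τ ^ q) *
        ∑' y : Fin N → ℤ, ENNReal.ofReal ((1 + latNorm nrm y ^ r) * G y) := by
    rw [← ENNReal.tsum_mul_left]
    apply ENNReal.tsum_le_tsum
    intro y
    rw [← ENNReal.ofReal_mul (by positivity)]
    apply ENNReal.ofReal_le_ofReal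
    calc (1 + latNorm nrm y ^ r) * |D 0 τ x y|
        ≤ (1 + latNorm nrm y ^ r) * (τ ^ q * G y) :=
          mul_le_mul_of_nonneg_left (htay x y τ ⟨hτ0, hτδ⟩) (hw y)
      _ = τ ^ q * ((1 + latNorm nrm y ^ r) * G y) := by ring
  -- Step 2: bound ∑' (w * G)
  have step2 : (∑' y : Fin N → ℤ, ENNReal.ofReal ((1 + latNorm nrm y ^ r) * G y))
      ≤ ENNReal.ofReal (2 * H * K * (Real.exp (|γ| * δ) * Real.exp (γ * τ)) * τ) := by
    have e1 : ∀ y : Fin N → ℤ, ENNReal.ofReal ((1 + latNorm nrm y ^ r) * G y)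
        = ∫⁻ t in Set.Ioc (0:ℝ) τ, F y t := by
      intro y
      have hInt : MeasureTheory.IntegrableOn
          (fun t => (1 + latNorm nrm y ^ r) * |D (q+1) t x y|) (Set.Ioc (0:ℝ) τ) := by
        have : MeasureTheory.IntegrableOn
            (fun t => (1 + latNorm nrm y ^ r) * |D (q+1) t x y|) (Set.Icc (0:ℝ) τ) := by
          apply ContinuousOn.integrableOn_Icc
          exact continuousOn_const.mul ((hDcont x y).mono hIccsub).abs
        exact this.mono_set Set.Ioc_subset_Icc_self
      have e2 : (1 + latNorm nrm y ^ r) * G y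
          = ∫ t in Set.Ioc (0:ℝ) τ, (1 + latNorm nrm y ^ r) * |D (q+1) t x y| := by
        rw [hGdef]
        rw [← intervalIntegral.integral_const_mul, intervalIntegral.integral_of_le hτ0]
      rw [e2, MeasureTheory.ofReal_integral_eq_lintegral_ofReal hInt
        (Filter.Eventually.of_forall (fun t => mul_nonneg (hw y) (abs_nonneg _)))]
    calc (∑' y : Fin N → ℤ, ENNReal.ofReal ((1 + latNorm nrm y ^ r) * G y))
        = ∑' y : Fin N → ℤ, ∫⁻ t in Set.Ioc (0:ℝ) τ, F y t := by
          exact tsum_congr e1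
      _ = ∫⁻ t in Set.Ioc (0:ℝ) τ, ∑' y : Fin N → ℤ, F y t := by
          refine (MeasureTheory.lintegral_tsum ?_).symm
          intro y
          apply ENNReal.measurable_ofReal.comp_aemeasurable
          exact (AEMeasurable.const_mul
            ((((hDcont x y).mono hIocsub).abs).aemeasurable measurableSet_Ioc) _)
      _ ≤ ∫⁻ _t in Set.Ioc (0:ℝ) τ,
            ENNReal.ofReal (2 * H * K * (Real.exp (|γ| * δ) * Real.exp (γ * τ))) := by
          apply MeasureTheory.setLIntegral_mono measurable_const
          intro t ht
          have ht' : t ∈ Set.Ico (0:ℝ) δ := hIocsub ht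
          calc (∑' y : Fin N → ℤ, F y t)
              ≤ ENNReal.ofReal (2 * H * K * Real.exp (γ * t)) := by
                have := hDbd t ht' x
                simpa [hF, hK, mul_assoc, mul_comm, mul_left_comm] using this
            _ ≤ ENNReal.ofReal (2 * H * K * (Real.exp (|γ| * δ) * Real.exp (γ * τ))) := by
                apply ENNReal.ofReal_le_ofReal
                apply mul_le_mul_of_nonneg_left _ (by positivity)
                rw [← Real.exp_add]
                apply Real.exp_le_exp.mpr
                have h1 : γ * t - γ * τ ≤ |γ| * δ := by
                  calc γ * t - γ * τ = γ * (t - τ) := by ring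
                    _ ≤ |γ * (t - τ)| := le_abs_self _
                    _ = |γ| * |t - τ| := abs_mul _ _
                    _ ≤ |γ| * δ := by
                        apply mul_le_mul_of_nonneg_left _ (abs_nonneg γ)
                        rw [abs_sub_comm, abs_of_nonneg (by linarith [ht.2] : (0:ℝ) ≤ τ - t)]
                        linarith [ht.1, ht'.2]
                linarith
      _ = ENNReal.ofReal (2 * H * K * (Real.exp (|γ| * δ) * Real.exp (γ * τ))) *
            ENNReal.ofReal τ := by
          rw [MeasureTheory.setLIntegral_const, Real.volume_Ioc, sub_zero]
      _ = ENNReal.ofReal (2 * H * K * (Real.exp (|γ| * δ) * Real.exp (γ * τ)) * τ) := by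
          rw [← ENNReal.ofReal_mul (by positivity)]
  calc (∑' y : Fin N → ℤ, ENNReal.ofReal ((1 + latNorm nrm y ^ r) * |D 0 τ x y|))
      ≤ ENNReal.ofReal (τ ^ q) *
        ∑' y : Fin N → ℤ, ENNReal.ofReal ((1 + latNorm nrm y ^ r) * G y) := step1
    _ ≤ ENNReal.ofReal (τ ^ q) *
        ENNReal.ofReal (2 * H * K * (Real.exp (|γ| * δ) * Real.exp (γ * τ)) * τ) :=
          mul_le_mul_right step2 _
    _ = ENNReal.ofReal (2 * H * Real.exp (|γ| * δ) * K * τ ^ (q+1) * Real.exp (γ * τ)) := by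
          rw [← ENNReal.ofReal_mul (by positivity)]
          congr 1
          ring

theorem stmt8 (N : ℕ) (hN : 1 ≤ N) (nrm : (Fin N → ℝ) → ℝ) (hnrm : IsNormOn N nrm)
    (q r s : ℕ) (δ γ H : ℝ) (hδ : 0 < δ) (hH : 0 < H)
    (P φ : ℕ → ℝ → (Fin N → ℤ) → (Fin N → ℤ) → ℝ)
    (hP : DerivFamily q δ P) (hφ : DerivFamily q δ φ)
    -- all derivatives up to order q agree at τ = 0
    (hmatch : ∀ i ≤ q, ∀ x x', φ i 0 x x' = P i 0 x x')
    -- derivative bound for φ^{(q+1)}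
    (hφbd : ∀ τ ∈ Set.Ico (0:ℝ) δ, ∀ x,
        (∑' x' : Fin N → ℤ, ENNReal.ofReal ((1 + latNorm nrm x' ^ r) * |φ (q+1) τ x x'|))
          ≤ ENNReal.ofReal (H * (latNorm nrm x ^ s + 1) * Real.exp (γ * τ)))
    -- the same bound for P^{(q+1)}
    (hPbd : ∀ τ ∈ Set.Ico (0:ℝ) δ, ∀ x,
        (∑' x' : Fin N → ℤ, ENNReal.ofReal ((1 + latNorm nrm x' ^ r) * |P (q+1) τ x x'|))
          ≤ ENNReal.ofReal (H * (latNorm nrm x ^ s + 1) * Real.exp (γ * τ))) :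
    ∃ C > (0:ℝ), ∀ τ ∈ Set.Ico (0:ℝ) δ, ∀ g : (Fin N → ℤ) → ℝ,
      -- g ∈ M : all moment variations finite
      (∀ m : ℕ, Summable (fun x => (1 + latNorm nrm x ^ m) * |g x|)) →
      (∑' y : Fin N → ℤ, ENNReal.ofReal
          ((1/2) * (1 + latNorm nrm y ^ r) *
            |∑' x : Fin N → ℤ, (φ 0 τ x y - P 0 τ x y) * g x|))
        ≤ ENNReal.ofReal
            (C * (∑' x : Fin N → ℤ, (1/2) * (1 + latNorm nrm x ^ (s + r)) * |g x|)
              * τ ^ (q+1) * Real.exp (γ * τ)) := by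
  obtain ⟨hnn, -, -, -⟩ := hnrm
  set E : ℝ := Real.exp (|γ| * δ) with hE
  have hE0 : 0 < E := Real.exp_pos _
  refine ⟨4 * H * E, by positivity, ?_⟩
  intro τ hτ g hg
  obtain ⟨hτ0, hτδ⟩ := hτ
  have hw : ∀ (m : ℕ) (y : Fin N → ℤ), (0:ℝ) ≤ 1 + latNorm nrm y ^ m := by
    intro m y
    have : 0 ≤ latNorm nrm y := hnn _
    positivity
  -- Taylor bound for the difference kernel
  have htay : ∀ x y, ∀ τ' ∈ Set.Ico (0:ℝ) δ,
      |φ 0 τ' x y - P 0 τ' x y| ≤ τ' ^ q * ∫ t in (0:ℝ)..τ', |φ (q+1) t x y - P (q+1) t x y| := by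
    intro x y τ' hτ'
    exact taylor_bound q δ (fun i t => φ i t x y - P i t x y)
      (fun i hi t ht => (hφ.2.2.1 i hi x y t ht).sub (hP.2.2.1 i hi x y t ht))
      ((hφ.2.2.2 x y).sub (hP.2.2.2 x y))
      (fun i hi => by show φ i 0 x y - P i 0 x y = 0; rw [hmatch i hi x y, sub_self]) hτ'
  -- summed bound for the (q+1)-st difference derivative
  have hDbd : ∀ t ∈ Set.Ico (0:ℝ) δ, ∀ x,
      (∑' y : Fin N → ℤ, ENNReal.ofReal ((1 + latNorm nrm y ^ r) * |φ (q+1) t x y - P (q+1) t x y|))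
        ≤ ENNReal.ofReal (2 * H * (latNorm nrm x ^ s + 1) * Real.exp (γ * t)) := by
    intro t ht x
    have hxnn : 0 ≤ latNorm nrm x := hnn _
    calc (∑' y : Fin N → ℤ,
          ENNReal.ofReal ((1 + latNorm nrm y ^ r) * |φ (q+1) t x y - P (q+1) t x y|))
        ≤ ∑' y : Fin N → ℤ,
            (ENNReal.ofReal ((1 + latNorm nrm y ^ r) * |φ (q+1) t x y|) +
             ENNReal.ofReal ((1 + latNorm nrm y ^ r) * |P (q+1) t x y|)) := by
          apply ENNReal.tsum_le_tsum
          intro y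
          rw [← ENNReal.ofReal_add (mul_nonneg (hw r y) (abs_nonneg _))
            (mul_nonneg (hw r y) (abs_nonneg _))]
          apply ENNReal.ofReal_le_ofReal
          rw [← mul_add]
          exact mul_le_mul_of_nonneg_left (abs_sub _ _) (hw r y)
      _ = (∑' y : Fin N → ℤ, ENNReal.ofReal ((1 + latNorm nrm y ^ r) * |φ (q+1) t x y|)) +
          (∑' y : Fin N → ℤ, ENNReal.ofReal ((1 + latNorm nrm y ^ r) * |P (q+1) t x y|)) :=
          ENNReal.tsum_add
      _ ≤ ENNReal.ofReal (H * (latNorm nrm x ^ s + 1) * Real.exp (γ * t)) +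
          ENNReal.ofReal (H * (latNorm nrm x ^ s + 1) * Real.exp (γ * t)) :=
          add_le_add (hφbd t ht x) (hPbd t ht x)
      _ = ENNReal.ofReal (2 * H * (latNorm nrm x ^ s + 1) * Real.exp (γ * t)) := by
          rw [← ENNReal.ofReal_add (by positivity) (by positivity)]
          congr 1
          ring
  -- the key bound, per starting point x
  have hkey : ∀ x : Fin N → ℤ,
      (∑' y : Fin N → ℤ, ENNReal.ofReal ((1 + latNorm nrm y ^ r) * |φ 0 τ x y - P 0 τ x y|))
        ≤ ENNReal.ofReal (2 * H * E * (latNorm nrm x ^ s + 1)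
            * τ ^ (q+1) * Real.exp (γ * τ)) := by
    intro x
    exact sumBound nrm hnn q r s δ γ H hH
      (fun i t x y => φ i t x y - P i t x y)
      (fun x y => (hφ.2.2.2 x y).sub (hP.2.2.2 x y)) hDbd htay ⟨hτ0, hτδ⟩ x
  -- summability facts
  have hgabs : Summable (fun x => |g x|) := by
    have h := hg 0
    exact (h.mul_left (1/2)).congr (fun x => by rw [pow_zero]; ring)
  have hbd01 : ∀ (ψ : ℕ → ℝ → (Fin N → ℤ) → (Fin N → ℤ) → ℝ), DerivFamily q δ ψ →
      ∀ x y, 0 ≤ ψ 0 τ x y ∧ ψ 0 τ x y ≤ 1 := by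
    intro ψ hψ x y
    refine ⟨hψ.1 τ ⟨hτ0, hτδ⟩ x y, ?_⟩
    have h1 : ENNReal.ofReal (ψ 0 τ x y) ≤ 1 :=
      le_trans (ENNReal.le_tsum y) (hψ.2.1 τ ⟨hτ0, hτδ⟩ x)
    exact ENNReal.ofReal_le_one.mp h1
  have habs2 : ∀ x y, |φ 0 τ x y - P 0 τ x y| ≤ 2 := by
    intro x y
    obtain ⟨h1, h2⟩ := hbd01 φ hφ x y
    obtain ⟨h3, h4⟩ := hbd01 P hP x y
    rw [abs_sub_le_iff]
    constructor <;> linarith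
  have hsumDg : ∀ y, Summable (fun x => |φ 0 τ x y - P 0 τ x y| * |g x|) := by
    intro y
    apply Summable.of_nonneg_of_le (fun x => mul_nonneg (abs_nonneg _) (abs_nonneg _))
      (fun x => mul_le_mul_of_nonneg_right (habs2 x y) (abs_nonneg _))
    exact hgabs.mul_left 2
  have hSy : ∀ y, |∑' x : Fin N → ℤ, (φ 0 τ x y - P 0 τ x y) * g x| ≤
      ∑' x : Fin N → ℤ, |φ 0 τ x y - P 0 τ x y| * |g x| := by
    intro y
    have hs : Summable (fun x : Fin N → ℤ => ‖(φ 0 τ x y - P 0 τ x y) * g x‖) := by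
      simpa [Real.norm_eq_abs, abs_mul] using hsumDg y
    calc |∑' x : Fin N → ℤ, (φ 0 τ x y - P 0 τ x y) * g x|
        = ‖∑' x : Fin N → ℤ, (φ 0 τ x y - P 0 τ x y) * g x‖ := (Real.norm_eq_abs _).symm
      _ ≤ ∑' x : Fin N → ℤ, ‖(φ 0 τ x y - P 0 τ x y) * g x‖ := norm_tsum_le_tsum_norm hs
      _ = ∑' x : Fin N → ℤ, |φ 0 τ x y - P 0 τ x y| * |g x| := by
          apply tsum_congr
          intro x
          rw [Real.norm_eq_abs, abs_mul]
  have hKle : ∀ x : Fin N → ℤ, latNorm nrm x ^ s + 1 ≤ 2 * (1 + latNorm nrm x ^ (s+r)) := by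
    intro x
    have hxnn : 0 ≤ latNorm nrm x := hnn _
    have h1 : latNorm nrm x ^ s ≤ 1 + latNorm nrm x ^ (s+r) := by
      rcases le_or_gt (latNorm nrm x) 1 with h | h
      · have : latNorm nrm x ^ s ≤ 1 := pow_le_one₀ hxnn h
        have := pow_nonneg hxnn (s+r)
        linarith
      · have : latNorm nrm x ^ s ≤ latNorm nrm x ^ (s+r) :=
          pow_le_pow_right₀ (le_of_lt h) (Nat.le_add_right s r)
        linarith
    have := pow_nonneg hxnn (s+r)
    linarith
  -- main chain
  calc (∑' y : Fin N → ℤ, ENNReal.ofReal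
          ((1/2) * (1 + latNorm nrm y ^ r) *
            |∑' x : Fin N → ℤ, (φ 0 τ x y - P 0 τ x y) * g x|))
      ≤ ∑' y : Fin N → ℤ, ENNReal.ofReal
          ((1/2) * (1 + latNorm nrm y ^ r) *
            ∑' x : Fin N → ℤ, |φ 0 τ x y - P 0 τ x y| * |g x|) := by
        apply ENNReal.tsum_le_tsum
        intro y
        apply ENNReal.ofReal_le_ofReal
        exact mul_le_mul_of_nonneg_left (hSy y) (by have := hw r y; positivity)
    _ = ∑' y : Fin N → ℤ, ∑' x : Fin N → ℤ, ENNReal.ofReal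
          ((1/2) * (1 + latNorm nrm y ^ r) * (|φ 0 τ x y - P 0 τ x y| * |g x|)) := by
        apply tsum_congr
        intro y
        rw [← tsum_mul_left]
        apply ENNReal.ofReal_tsum_of_nonneg
        · intro x
          exact mul_nonneg (mul_nonneg (by norm_num) (hw r y))
            (mul_nonneg (abs_nonneg _) (abs_nonneg _))
        · exact (hsumDg y).mul_left _
    _ = ∑' x : Fin N → ℤ, ∑' y : Fin N → ℤ, ENNReal.ofReal
          ((1/2) * (1 + latNorm nrm y ^ r) * (|φ 0 τ x y - P 0 τ x y| * |g x|)) :=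
        ENNReal.tsum_comm
    _ = ∑' x : Fin N → ℤ, ENNReal.ofReal ((1/2) * |g x|) *
          ∑' y : Fin N → ℤ, ENNReal.ofReal ((1 + latNorm nrm y ^ r) * |φ 0 τ x y - P 0 τ x y|) := by
        apply tsum_congr
        intro x
        rw [← ENNReal.tsum_mul_left]
        apply tsum_congr
        intro y
        rw [← ENNReal.ofReal_mul (by positivity)]
        congr 1
        ring
    _ ≤ ∑' x : Fin N → ℤ, ENNReal.ofReal ((1/2) * |g x|) *
          ENNReal.ofReal (2 * H * E * (latNorm nrm x ^ s + 1) * τ ^ (q+1) * Real.exp (γ * τ)) := by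
        apply ENNReal.tsum_le_tsum
        intro x
        exact mul_le_mul_right (hkey x) _
    _ ≤ ∑' x : Fin N → ℤ, ENNReal.ofReal ((4 * H * E * τ ^ (q+1) * Real.exp (γ * τ)) *
          ((1/2) * (1 + latNorm nrm x ^ (s+r)) * |g x|)) := by
        apply ENNReal.tsum_le_tsum
        intro x
        rw [← ENNReal.ofReal_mul (by positivity)]
        apply ENNReal.ofReal_le_ofReal
        have hxnn : 0 ≤ latNorm nrm x := hnn _
        calc (1/2) * |g x| * (2 * H * E * (latNorm nrm x ^ s + 1) * τ ^ (q+1) * Real.exp (γ * τ))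
            = (H * E * τ ^ (q+1) * Real.exp (γ * τ) * |g x|) * (latNorm nrm x ^ s + 1) := by
              ring
          _ ≤ (H * E * τ ^ (q+1) * Real.exp (γ * τ) * |g x|) *
                (2 * (1 + latNorm nrm x ^ (s+r))) :=
              mul_le_mul_of_nonneg_left (hKle x) (by positivity)
          _ = (4 * H * E * τ ^ (q+1) * Real.exp (γ * τ)) *
                ((1/2) * (1 + latNorm nrm x ^ (s+r)) * |g x|) := by ring
    _ = ENNReal.ofReal ((4 * H * E * τ ^ (q+1) * Real.exp (γ * τ)) *
          ∑' x : Fin N → ℤ, (1/2) * (1 + latNorm nrm x ^ (s+r)) * |g x|) := by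
        rw [← tsum_mul_left]
        refine (ENNReal.ofReal_tsum_of_nonneg ?_ ?_).symm
        · intro x
          exact mul_nonneg (by positivity)
            (mul_nonneg (mul_nonneg (by norm_num) (hw (s+r) x)) (abs_nonneg _))
        · exact ((hg (s+r)).mul_left ((4 * H * E * τ ^ (q+1) * Real.exp (γ * τ)) * (1/2))).congr
            (fun x => by ring)
    _ = ENNReal.ofReal (4 * H * E *
          (∑' x : Fin N → ℤ, (1/2) * (1 + latNorm nrm x ^ (s+r)) * |g x|)
            * τ ^ (q+1) * Real.exp (γ * τ)) := by
        congr 1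
        ring
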